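/- Let G be a graph with a fixed orientation of its edges, let f : V(G) → L be continuous, and let W be a closed walk in G that is (f,0)-almost contractible (i.e., I_W = Σ_{i=1}^n I_{T_i} for some f-contractible triangles T₁, …, T_n). Then ∫_W df = 0. -/

import Mathlib

/-- A graph together with a fixed orientation of its edges: each edge `e` has a
tail `e⁻` and a head `e⁺`. -/
structure OGraph : Type 1 where
  V : Type
  E : Type
  tail : E → V
  head : E → V

/-- The set of labels `L = {−1, 0, 1, ⋆}`. -/
inductive L : Type
  | neg | zero | pos | star
deriving DecidableEq

/-- The integer value of a label (with junk value `0` at `⋆`). -/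
def L.toInt : L → ℤ
  | .neg => -1
  | .zero => 0
  | .pos => 1
  | .star => 0

/-- Two vertices are adjacent if some edge has them as its two endpoints. -/
def OGraph.Adj (G : OGraph) (u v : G.V) : Prop :=
  ∃ e : G.E, (G.tail e = u ∧ G.head e = v) ∨ (G.tail e = v ∧ G.head e = u)

/-- `f` is continuous on `S`: no edge of `G` between vertices of `S` joins the
values `−1` and `1`. -/
def OContinuousOn (G : OGraph) (f : G.V → L) (S : Set G.V) : Prop :=
  ∀ u v : G.V, u ∈ S → v ∈ S → G.Adj u v → ¬(f u = L.neg ∧ f v = L.pos)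

/-- `f` is holomorphic on `S`: it is continuous on `S` and moreover no edge of `G`
between vertices of `S` joins the values `0` and `⋆`. -/
def OHolomorphicOn (G : OGraph) (f : G.V → L) (S : Set G.V) : Prop :=
  OContinuousOn G f S ∧
  ∀ u v : G.V, u ∈ S → v ∈ S → G.Adj u v → ¬(f u = L.zero ∧ f v = L.star)

/-- `f` is entire on `S`: it is continuous on `S` and takes no value `⋆` on `S`. -/
def OEntireOn (G : OGraph) (f : G.V → L) (S : Set G.V) : Prop :=
  OContinuousOn G f S ∧ ∀ v ∈ S, f v ≠ L.star

/-- The derivative `df : E(G) → ℤ`: `df(e) = f(e⁺) − f(e⁻)` if neither endpoint has value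
`⋆`, and `df(e) = 0` otherwise. -/
def dF (G : OGraph) (f : G.V → L) (e : G.E) : ℤ :=
  if f (G.tail e) = L.star ∨ f (G.head e) = L.star then 0
  else (f (G.head e)).toInt - (f (G.tail e)).toInt

/-- A walk `(v₀, e₁, v₁, …, e_n, v_n)` in `G`, not necessarily respecting the
orientation: each edge `e_i` joins `v_{i−1}` and `v_i` (in one of the two directions). -/
structure OWalk (G : OGraph) where
  n : ℕ
  v : Fin (n + 1) → G.V
  e : Fin n → G.E
  valid : ∀ i : Fin n,
    (G.tail (e i) = v i.castSucc ∧ G.head (e i) = v i.succ) ∨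
    (G.head (e i) = v i.castSucc ∧ G.tail (e i) = v i.succ)

open scoped Classical in
/-- `I_W = Σ_i ε_i`, where `ε_i(e_i) = +1` if `v_i = e_i⁺`, `ε_i(e_i) = −1` if
`v_i = e_i⁻`, and `ε_i(e) = 0` for `e ≠ e_i`. -/
noncomputable def OWalk.I {G : OGraph} (W : OWalk G) (e' : G.E) : ℤ :=
  ∑ i : Fin W.n,
    if W.e i = e' then (if G.head (W.e i) = W.v i.succ then 1 else -1) else 0

/-- `∫_W h = Σ_{e ∈ E(G)} I_W(e) · h(e)`. -/
noncomputable def intW {G : OGraph} [Fintype G.E] (W : OWalk G) (h : G.E → ℤ) : ℤ :=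
  ∑ e : G.E, W.I e * h e

open scoped Classical

lemma intW_eq (G : OGraph) [Fintype G.E] (W : OWalk G) (h : G.E → ℤ) :
    intW W h = ∑ i : Fin W.n,
      (if G.head (W.e i) = W.v i.succ then (1:ℤ) else -1) * h (W.e i) := by
  simp only [intW, OWalk.I, Finset.sum_mul, ite_mul, zero_mul]
  rw [Finset.sum_comm]
  refine Finset.sum_congr rfl fun i _ => ?_
  simp [Finset.sum_ite_eq]

lemma teles (G : OGraph) [Fintype G.E] (W : OWalk G) (h : G.E → ℤ) (g : G.V → ℤ)
    (H : ∀ i : Fin W.n,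
      (if G.head (W.e i) = W.v i.succ then (1:ℤ) else -1) * h (W.e i)
        = g (W.v i.succ) - g (W.v i.castSucc)) :
    intW W h = g (W.v (Fin.last W.n)) - g (W.v 0) := by
  rw [intW_eq, Finset.sum_congr rfl (fun i _ => H i)]
  have key : ∀ (n : ℕ) (u : Fin (n+1) → ℤ),
      ∑ i : Fin n, (u i.succ - u i.castSucc) = u (Fin.last n) - u 0 := by
    intro n
    induction n with
    | zero => intro u; simp [Fin.last]
    | succ n ih =>
      intro u
      rw [Fin.sum_univ_castSucc]
      have h1 : ∀ i : Fin n, u i.castSucc.succ - u i.castSucc.castSucc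
          = (fun j => u j.castSucc) i.succ - (fun j => u j.castSucc) i.castSucc := by
        intro i; simp [-Fin.castSucc_succ, Fin.succ_castSucc]
      rw [Finset.sum_congr rfl (fun i _ => h1 i), ih (fun j => u j.castSucc)]
      simp [Fin.succ_last]
      try ring
  exact key W.n (fun i => g (W.v i))

lemma adj_symm (G : OGraph) {x y : G.V} (h : G.Adj x y) : G.Adj y x := by
  obtain ⟨e, he⟩ := h; exact ⟨e, he.symm⟩

lemma triAdj (G : OGraph) (v : Fin (3+1) → G.V) (e : Fin 3 → G.E)
    (valid : ∀ i : Fin 3,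
      (G.tail (e i) = v i.castSucc ∧ G.head (e i) = v i.succ) ∨
      (G.head (e i) = v i.castSucc ∧ G.tail (e i) = v i.succ))
    (hc : v (Fin.last 3) = v 0) (a b : Fin (3+1)) :
    v a = v b ∨ G.Adj (v a) (v b) := by
  have adjk : ∀ k : Fin 3, G.Adj (v k.castSucc) (v k.succ) :=
    fun k => ⟨e k, (valid k).imp id And.symm⟩
  have h30 : v 3 = v 0 := hc
  have A01 : G.Adj (v 0) (v 1) := adjk 0
  have A12 : G.Adj (v 1) (v 2) := adjk 1
  have A23 : G.Adj (v 2) (v 3) := adjk 2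
  have A20 : G.Adj (v 2) (v 0) := by rw [← h30]; exact A23
  have A13 : G.Adj (v 1) (v 3) := by rw [h30]; exact adj_symm G A01
  have A31 : G.Adj (v 3) (v 1) := adj_symm G A13
  fin_cases a <;> fin_cases b <;>
    first
      | exact Or.inl rfl
      | exact Or.inl h30
      | exact Or.inl h30.symm
      | exact Or.inr A01
      | exact Or.inr A12
      | exact Or.inr A23
      | exact Or.inr A20
      | exact Or.inr A13
      | exact Or.inr A31
      | exact Or.inr (adj_symm G A01)
      | exact Or.inr (adj_symm G A12)
      | exact Or.inr (adj_symm G A23)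
      | exact Or.inr (adj_symm G A20)

lemma tri_int_zero (G : OGraph) [Fintype G.E] (f : G.V → L) (t : OWalk G)
    (h3 : t.n = 3) (hc : t.v (Fin.last t.n) = t.v 0)
    (hh : OHolomorphicOn G f (Set.range t.v)) : intW t (dF G f) = 0 := by
  obtain ⟨n, v, e, valid⟩ := t
  simp only at h3
  subst h3
  simp only [Set.range] at hh
  have hc' : v (Fin.last 3) = v 0 := hc
  have adj := triAdj G v e valid hc'
  by_cases hstar : ∃ j : Fin (3+1), f (v j) = L.star
  · obtain ⟨j, hj⟩ := hstar
    rw [intW_eq]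
    apply Finset.sum_eq_zero
    intro i _
    suffices hdf : dF G f (e i) = 0 by
      show _ * dF G f (e i) = 0
      rw [hdf, mul_zero]
    unfold dF
    by_cases h1 : f (G.tail (e i)) = L.star ∨ f (G.head (e i)) = L.star
    · rw [if_pos h1]
    · rw [if_neg h1]
      push_neg at h1
      have key : f (v i.castSucc) = f (v i.succ) := by
        have hcs : f (v i.castSucc) ≠ L.star ∧ f (v i.succ) ≠ L.star := by
          rcases valid i with ⟨ht, hhd⟩ | ⟨hhd, ht⟩
          · exact ⟨ht ▸ h1.1, hhd ▸ h1.2⟩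
          · exact ⟨hhd ▸ h1.2, ht ▸ h1.1⟩
        have hz : ∀ a : Fin (3+1), f (v a) ≠ L.star → f (v a) ≠ L.zero := by
          intro a hA hz0
          rcases adj a j with hEq | hAdj
          · exact hA (hEq ▸ hj)
          · exact hh.2 (v a) (v j) ⟨a, rfl⟩ ⟨j, rfl⟩ hAdj ⟨hz0, hj⟩
        have h0c := hz _ hcs.1
        have h0s := hz _ hcs.2
        rcases adj i.castSucc i.succ with hEq | hA
        · rw [hEq]
        · have hnp := hh.1 (v i.castSucc) (v i.succ) ⟨_, rfl⟩ ⟨_, rfl⟩ hA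
          have hpn := hh.1 (v i.succ) (v i.castSucc) ⟨_, rfl⟩ ⟨_, rfl⟩ (adj_symm G hA)
          rcases hx : f (v i.castSucc) with _|_|_|_ <;>
            rcases hy : f (v i.succ) with _|_|_|_ <;>
            simp_all
      rcases valid i with ⟨ht, hhd⟩ | ⟨hhd, ht⟩
      · rw [ht, hhd, key, sub_self]
      · rw [ht, hhd, key, sub_self]
  · push_neg at hstar
    have H : ∀ i : Fin 3,
        (if G.head (e i) = v i.succ then (1:ℤ) else -1) * dF G f (e i)
          = (f (v i.succ)).toInt - (f (v i.castSucc)).toInt := by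
      intro i
      have hdf : ∀ _ : ¬(f (G.tail (e i)) = L.star ∨ f (G.head (e i)) = L.star),
          dF G f (e i) = (f (G.head (e i))).toInt - (f (G.tail (e i))).toInt := by
        intro ht; unfold dF; rw [if_neg ht]
      rcases valid i with ⟨ht, hhd⟩ | ⟨hhd, ht⟩
      · rw [if_pos hhd, one_mul, hdf (by rw [ht, hhd]; push_neg; exact ⟨hstar _, hstar _⟩),
          ht, hhd]
      · by_cases hcase : G.head (e i) = v i.succ
        · have heq : v i.castSucc = v i.succ := by rw [← hhd, hcase]
          rw [if_pos hcase, one_mul, hdf (by rw [ht, hhd]; push_neg; exact ⟨hstar _, hstar _⟩),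
            ht, hhd, heq]
        · rw [if_neg hcase, hdf (by rw [ht, hhd]; push_neg; exact ⟨hstar _, hstar _⟩),
            ht, hhd]
          ring
    have key := teles G ⟨3, v, e, valid⟩ (dF G f) (fun u => (f u).toInt) H
    rw [key]
    show (f (v (Fin.last 3))).toInt - (f (v 0)).toInt = 0
    rw [hc', sub_self]

/-- If `f` is continuous and `W` is a closed walk that is `(f,0)`-almost contractible,
i.e. `I_W = Σ_{i=1}^m I_{T_i}` for some `f`-contractible triangles `T₁, …, T_m`, then
`∫_W df = 0`. -/
theorem stmt_6 (G : OGraph) [Fintype G.E] (f : G.V → L)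
    (hcont : OContinuousOn G f Set.univ)
    (W : OWalk G) (hWclosed : W.v (Fin.last W.n) = W.v 0)
    (m : ℕ) (T : Fin m → OWalk G)
    (hT3 : ∀ i, (T i).n = 3)
    (hTclosed : ∀ i, (T i).v (Fin.last (T i).n) = (T i).v 0)
    (hTcontr : ∀ i, OHolomorphicOn G f (Set.range (T i).v))
    (hI : ∀ e : G.E, W.I e = ∑ i : Fin m, (T i).I e) :
    intW W (dF G f) = 0 := by
  classical
  unfold intW
  have hI' : ∀ e : G.E, W.I e * dF G f e = ∑ i : Fin m, (T i).I e * dF G f e := by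
    intro e; rw [hI e, Finset.sum_mul]
  rw [Finset.sum_congr rfl (fun e _ => hI' e), Finset.sum_comm]
  apply Finset.sum_eq_zero
  intro i _
  exact tri_int_zero G f (T i) (hT3 i) (hTclosed i) (hTcontr i)
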